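/- Let Γ be a linearly ordered, cancellative, additive commutative monoid and let R be a ring. Let f be a nonzero element of the Hahn series ring HahnSeries(Γ, R), let π(f) ∈ Γ be the smallest element of the support of f, and let θ(f) = f(π(f)) be the corresponding leading coefficient. If π(f) is an additive unit of Γ (i.e., has an additive inverse in Γ) and θ(f) is a unit of R, then f is a unit of HahnSeries(Γ, R). -/

import Mathlib

open Finset

namespace HahnSeriesAux

open HahnSeries HahnSeries.SummableFamily

variable {Γ R : Type*} [AddCommMonoid Γ] [LinearOrder Γ] [IsOrderedCancelAddMonoid Γ] [Ring R]

theorem isPWO_iUnion_support_powers' {x : HahnSeries Γ R} (hx : 0 < x.orderTop) :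
    (⋃ n : ℕ, (x ^ n).support).IsPWO := by
  apply (x.isWF_support.isPWO.addSubmonoid_closure _).mono _
  · exact fun g hg => WithTop.coe_le_coe.1
      (le_trans (le_of_lt hx) (HahnSeries.orderTop_le_of_coeff_ne_zero hg))
  refine Set.iUnion_subset fun n => ?_
  induction' n with n ih <;> intro g hn
  · rw [pow_zero, ← single_zero_one] at hn
    have h0 : g ∈ ({0} : Set Γ) := support_single_subset hn
    rw [Set.mem_singleton_iff] at h0
    rw [h0, SetLike.mem_coe]
    exact AddSubmonoid.zero_mem _
  · obtain ⟨i, hi, j, hj, rfl⟩ := support_mul_subset hn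
    exact SetLike.mem_coe.2 (AddSubmonoid.add_mem _ (ih hi) (AddSubmonoid.subset_closure hj))

/-- The powers of an element of positive valuation form a summable family
(general ring version, no `IsDomain` assumption). -/
noncomputable def powers' (x : HahnSeries Γ R) (hx : 0 < x.orderTop) :
    SummableFamily Γ R ℕ where
  toFun n := x ^ n
  isPWO_iUnion_support' := isPWO_iUnion_support_powers' hx
  finite_co_support' g := by
    have hpwo := isPWO_iUnion_support_powers' hx
    by_cases hg : g ∈ ⋃ n : ℕ, { g | (x ^ n).coeff g ≠ 0 }
    swap; · exact Set.finite_empty.subset fun n hn => hg (Set.mem_iUnion.2 ⟨n, hn⟩)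
    apply hpwo.isWF.induction hg
    intro y ys hy
    refine
      ((((addAntidiagonal x.isPWO_support hpwo y).finite_toSet.biUnion fun ij hij =>
                    hy ij.snd ?_ ?_).image
                Nat.succ).union
            (Set.finite_singleton 0)).subset
        ?_
    · exact (mem_addAntidiagonal.1 (mem_coe.1 hij)).2.1
    · obtain ⟨hi, _, rfl⟩ := mem_addAntidiagonal.1 (mem_coe.1 hij)
      rw [← zero_add ij.snd, ← add_assoc, add_zero]
      exact
        add_lt_add_left (WithTop.coe_lt_coe.1
          (hx.trans_le (HahnSeries.orderTop_le_of_coeff_ne_zero hi))) _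
    · rintro (_ | n) hn
      · exact Set.mem_union_right _ (Set.mem_singleton 0)
      · obtain ⟨i, hi, j, hj, rfl⟩ := support_mul_subset hn
        refine Set.mem_union_left _ ⟨n, Set.mem_iUnion.2 ⟨⟨j, i⟩, Set.mem_iUnion.2 ⟨?_, hi⟩⟩, rfl⟩
        simp only [Set.mem_iUnion, mem_addAntidiagonal, mem_coe, eq_self_iff_true, Ne,
          HahnSeries.mem_support, Set.mem_setOf_eq]
        exact Finset.mem_addAntidiagonal.2 ⟨hj, Set.mem_iUnion.2 ⟨n, hi⟩, add_comm j i⟩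

variable {x : HahnSeries Γ R} (hx : 0 < x.orderTop)

@[simp]
theorem coe_powers' : ⇑(powers' x hx) = HPow.hPow x :=
  rfl

theorem embDomain_succ_smul_powers' :
    (x • powers' x hx).embDomain ⟨Nat.succ, Nat.succ_injective⟩ =
      powers' x hx - SummableFamily.ofFinsupp (Finsupp.single 0 1) := by
  apply SummableFamily.ext
  rintro (_ | n)
  · rw [SummableFamily.embDomain_notin_range, SummableFamily.sub_apply, coe_powers', pow_zero, coe_ofFinsupp,
      Finsupp.single_eq_same, sub_self]
    rw [Set.mem_range, not_exists]
    exact Nat.succ_ne_zero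
  · refine Eq.trans (SummableFamily.embDomain_image _ ⟨Nat.succ, Nat.succ_injective⟩) ?_
    rw [SummableFamily.smul_apply, SummableFamily.sub_apply, coe_powers', coe_ofFinsupp, pow_succ',
      Finsupp.single_eq_of_ne (Nat.add_one_ne_zero n), sub_zero,
      HahnSeries.of_symm_smul_of_eq_mul]

theorem one_sub_self_mul_hsum_powers' : (1 - x) * (powers' x hx).hsum = 1 := by
  rw [← hsum_smul, sub_smul 1 x (powers' x hx), one_smul, hsum_sub, ←
    hsum_embDomain (x • powers' x hx) ⟨Nat.succ, Nat.succ_injective⟩, embDomain_succ_smul_powers']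
  simp

theorem hsum_powers_mul_self : (powers' x hx).hsum * x = x * (powers' x hx).hsum := by
  have h1 : (SummableFamily.smul (powers' x hx) (single () x)).hsum = (powers' x hx).hsum * x := by
    rw [smul_hsum, hsum_single, HahnSeries.of_symm_smul_of_eq_mul]
  have h2 : (SummableFamily.smul (single () x) (powers' x hx)).hsum = x * (powers' x hx).hsum := by
    rw [smul_hsum, hsum_single, HahnSeries.of_symm_smul_of_eq_mul]
  rw [← h1, ← h2]
  rw [← hsum_equiv (Equiv.prodComm ℕ Unit) (SummableFamily.smul (powers' x hx) (single () x))]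
  apply congrArg
  apply SummableFamily.ext
  rintro ⟨⟨⟩, n⟩
  show (SummableFamily.smul (powers' x hx) (single () x)) ((Equiv.prodComm ℕ Unit).symm (⟨⟩, n)) = _
  simp only [Equiv.prodComm_symm, Equiv.prodComm_apply, Prod.swap]
  show (HahnModule.of R).symm ((x ^ n) • (HahnModule.of R) x) =
    (HahnModule.of R).symm (x • (HahnModule.of R) (x ^ n))
  rw [HahnSeries.of_symm_smul_of_eq_mul, HahnSeries.of_symm_smul_of_eq_mul,
    ← pow_succ, ← pow_succ']

theorem mul_hsum_powers_one_sub : (powers' x hx).hsum * (1 - x) = 1 := by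
  calc (powers' x hx).hsum * (1 - x)
      = (powers' x hx).hsum - (powers' x hx).hsum * x := by rw [mul_sub, mul_one]
    _ = (powers' x hx).hsum - x * (powers' x hx).hsum := by rw [hsum_powers_mul_self hx]
    _ = (1 - x) * (powers' x hx).hsum := by rw [sub_mul, one_mul]
    _ = 1 := one_sub_self_mul_hsum_powers' hx

end HahnSeriesAux

open HahnSeries HahnSeriesAux

/-- Let `f` be a nonzero Hahn series, let `π f` be the smallest element of its
support and `θ f = f.coeff (π f)` the leading coefficient. If `π f` is an additive
unit of `Γ` and `θ f` is a unit of `R`, then `f` is a unit of `HahnSeries Γ R`. -/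
theorem hahnSeries_isUnit_of_leading (Γ : Type*)
    [AddCommMonoid Γ] [LinearOrder Γ] [IsOrderedCancelAddMonoid Γ] (R : Type*) [Ring R]
    (f : HahnSeries Γ R) (hf : f ≠ 0)
    (hπ : IsAddUnit (f.isWF_support.min (HahnSeries.support_nonempty_iff.mpr hf)))
    (hθ : IsUnit (f.coeff (f.isWF_support.min (HahnSeries.support_nonempty_iff.mpr hf)))) :
    IsUnit f := by
  obtain ⟨a, ha⟩ := hπ
  obtain ⟨t, ht⟩ := hθ
  have hgord : f.order = f.isWF_support.min (HahnSeries.support_nonempty_iff.mpr hf) :=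
    order_of_ne hf
  have hcoeff : f.coeff f.order ≠ 0 := coeff_order_eq_zero.not.mpr hf
  have : Nontrivial R := nontrivial_of_ne _ _ hcoeff
  have hag : (↑a : Γ) = f.order := by rw [ha, hgord]
  have hbg : (↑(-a) : Γ) + f.order = 0 := by rw [← hag]; exact a.neg_add
  have hgb : f.order + (↑(-a) : Γ) = 0 := by rw [← hag]; exact a.add_neg
  have htf : (↑t : R) = f.coeff f.order := by rw [ht, hgord]
  have hρ0 : (↑t⁻¹ : R) ≠ 0 := t⁻¹.ne_zero
  have huv : (single (↑(-a) : Γ) (↑t⁻¹ : R)) * (single (f.order) (↑t : R)) = 1 := by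
    rw [single_mul_single, hbg, t.inv_mul, single_zero_one]
  have hvu : (single (f.order) (↑t : R)) * (single (↑(-a) : Γ) (↑t⁻¹ : R)) = 1 := by
    rw [single_mul_single, hgb, t.mul_inv, single_zero_one]
  set u : HahnSeries Γ R := single (↑(-a) : Γ) (↑t⁻¹ : R) with hu
  set v : HahnSeries Γ R := single (f.order) (↑t : R) with hv
  have hw0 : (u * f).coeff 0 = 1 := by
    have h := coeff_mul_order_add_order u f
    rw [hu, order_single hρ0, leadingCoeff_of_single] at h
    rw [← hu] at h
    rw [hbg] at h
    rw [h, leadingCoeff_eq, ← htf, t.inv_mul]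
  have hot : 0 < (1 - u * f).orderTop := by
    refine lt_of_le_of_ne (le_trans ?_ min_orderTop_le_orderTop_sub) fun h => ?_
    · refine le_min (by rw [orderTop_one]) ?_
      refine le_trans ?_ orderTop_add_le_mul
      rw [hu, orderTop_single hρ0, ← order_eq_orderTop_of_ne_zero hf, ← WithTop.coe_add, hbg]
      exact le_of_eq (by norm_cast)
    · apply coeff_orderTop_ne h.symm
      rw [coeff_sub, coeff_one, if_pos rfl, hw0, sub_self]
  set S : HahnSeries Γ R := (HahnSeriesAux.powers' (1 - u * f) hot).hsum with hS
  have hwS : (u * f) * S = 1 := by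
    have h := HahnSeriesAux.one_sub_self_mul_hsum_powers' hot
    rwa [sub_sub_cancel] at h
  have hSw : S * (u * f) = 1 := by
    have h := HahnSeriesAux.mul_hsum_powers_one_sub hot
    rwa [sub_sub_cancel] at h
  have hleft : (S * u) * f = 1 := by rw [mul_assoc]; exact hSw
  have hfS : f * S = v := by
    have h2 : v * ((u * f) * S) = v := by rw [hwS, mul_one]
    rwa [← mul_assoc, ← mul_assoc, hvu, one_mul] at h2
  have hright : f * (S * u) = 1 := by rw [← mul_assoc, hfS, hvu]
  exact ⟨⟨f, S * u, hright, hleft⟩, rfl⟩
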